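/- Periodic ARMA_K steady state: Under the previous setting, if |Π_{τ=0}^{K-1}(θ_τ + ψ_τ μ_n)| < 1 for every eigenvalue μ_n of M, then y_{iK} converges as i → ∞ to Σ_n g(μ_n) ⟨x, φ_n⟩ φ_n, where g(μ) = [Σ_{τ=0}^{K-1} Π_{σ=K−τ}^{K−1}(θ_σ + ψ_σ μ) · φ_{K−τ−1}] / [1 − Π_{τ=0}^{K-1}(θ_τ + ψ_τ μ)]. -/

import Mathlib

open Filter
open scoped InnerProductSpace

lemma arma_affine_unroll (a d c : ℕ → ℂ) (hc : ∀ t, c (t + 1) = a t * c t + d t)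
    (s : ℕ) : ∀ m, c (s + m) =
      (∏ j ∈ Finset.range m, a (s + j)) * c s +
        ∑ j ∈ Finset.range m, (∏ σ ∈ Finset.Ico (j + 1) m, a (s + σ)) * d (s + j) := by
  intro m
  induction m with
  | zero => simp
  | succ m ih =>
    have h1 : s + (m + 1) = (s + m) + 1 := by ring
    have key : ∀ j ∈ Finset.range m, (∏ σ ∈ Finset.Ico (j + 1) (m + 1), a (s + σ)) * d (s + j)
        = ((∏ σ ∈ Finset.Ico (j + 1) m, a (s + σ)) * d (s + j)) * a (s + m) := by
      intro j hj
      rw [Finset.prod_Ico_succ_top (Finset.mem_range.mp hj)]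
      ring
    have hsum : ∑ j ∈ Finset.range (m + 1),
          (∏ σ ∈ Finset.Ico (j + 1) (m + 1), a (s + σ)) * d (s + j)
        = (∑ j ∈ Finset.range m, (∏ σ ∈ Finset.Ico (j + 1) m, a (s + σ)) * d (s + j)) * a (s + m)
          + d (s + m) := by
      rw [Finset.sum_range_succ, Finset.sum_congr rfl key, ← Finset.sum_mul]
      simp [Finset.Ico_self]
    rw [h1, hc, ih, Finset.prod_range_succ, hsum]
    ring

lemma arma_periodic_shift {K : ℕ} (f : ℕ → ℂ) (hf : ∀ t, f (t + K) = f t) (i t : ℕ) :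
    f (t + i * K) = f t := by
  induction i with
  | zero => simp
  | succ i ih => rw [Nat.succ_mul, ← Nat.add_assoc, hf, ih]

lemma arma_geom (P Q : ℂ) (c : ℕ → ℂ) (hc : ∀ i, c (i + 1) = P * c i + Q) :
    ∀ i, c i = P ^ i * c 0 + (∑ j ∈ Finset.range i, P ^ j) * Q := by
  intro i
  induction i with
  | zero => simp
  | succ i ih =>
    rw [hc, ih, geom_sum_succ, pow_succ]
    ring

lemma arma_reflect_sum (K : ℕ) (a f : ℕ → ℂ) :
    ∑ τ ∈ Finset.range K, (∏ σ ∈ Finset.Ico (K - τ) K, a σ) * f (K - τ - 1)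
      = ∑ j ∈ Finset.range K, (∏ σ ∈ Finset.Ico (j + 1) K, a σ) * f j := by
  rw [← Finset.sum_range_reflect (fun j => (∏ σ ∈ Finset.Ico (j + 1) K, a σ) * f j) K]
  refine Finset.sum_congr rfl fun τ hτ => ?_
  have h : τ < K := Finset.mem_range.mp hτ
  have h1 : K - 1 - τ + 1 = K - τ := by omega
  have h2 : K - τ - 1 = K - 1 - τ := by omega
  simp only [h1, h2]

/-- Periodic ARMA_K steady state: for the recursion `y_{t+1} = (θ_t I + ψ_t M) y_t + φ_t x`
with `K`-periodic coefficients, if `|∏_{τ<K} (θ_τ + ψ_τ μ_n)| < 1` for every eigenvalue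
`μ_n` of `M`, then `y_{iK}` converges as `i → ∞` to `∑ n, g(μ_n) ⟨x, φ_n⟩ φ_n`, where
`g(μ) = (∑_{τ<K} ∏_{σ=K-τ}^{K-1} (θ_σ + ψ_σ μ) φ_{K-τ-1}) / (1 − ∏_{τ<K} (θ_τ + ψ_τ μ))`. -/
theorem armaK_periodic_steady_state {N K : ℕ} (M : Matrix (Fin N) (Fin N) ℝ)
    (hM : M.IsSymm)
    (μ : Fin N → ℝ) (v : Fin N → EuclideanSpace ℂ (Fin N)) (hortho : Orthonormal ℂ v)
    (heig : ∀ n, (Matrix.toEuclideanCLM (𝕜 := ℂ) (M.map Complex.ofReal)) (v n) =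
      (μ n : ℂ) • v n)
    (θ ψ φ : ℕ → ℂ)
    (hθ : ∀ t, θ (t + K) = θ t) (hψ : ∀ t, ψ (t + K) = ψ t) (hφ : ∀ t, φ (t + K) = φ t)
    (hstab : ∀ n, ‖∏ τ ∈ Finset.range K, (θ τ + ψ τ * (μ n : ℂ))‖ < 1)
    (x : EuclideanSpace ℂ (Fin N)) (y : ℕ → EuclideanSpace ℂ (Fin N))
    (hy : ∀ t, y (t + 1) = θ t • y t +
      ψ t • (Matrix.toEuclideanCLM (𝕜 := ℂ) (M.map Complex.ofReal)) (y t) + φ t • x) :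
    Tendsto (fun i => y (i * K)) atTop (nhds
      (∑ n,
        ((∑ τ ∈ Finset.range K,
            (∏ σ ∈ Finset.Ico (K - τ) K, (θ σ + ψ σ * (μ n : ℂ))) * φ (K - τ - 1)) /
          (1 - ∏ τ ∈ Finset.range K, (θ τ + ψ τ * (μ n : ℂ)))) •
        ⟪v n, x⟫_ℂ • v n)) := by
  classical
  rcases Nat.eq_zero_or_pos N with hN | hN
  · haveI : Subsingleton (EuclideanSpace ℂ (Fin N)) :=
      ⟨fun a b => PiLp.ext fun i => absurd i.2 (by omega)⟩
    have : (fun i => y (i * K)) = fun _ => (∑ n,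
        ((∑ τ ∈ Finset.range K,
            (∏ σ ∈ Finset.Ico (K - τ) K, (θ σ + ψ σ * (μ n : ℂ))) * φ (K - τ - 1)) /
          (1 - ∏ τ ∈ Finset.range K, (θ τ + ψ τ * (μ n : ℂ)))) •
        ⟪v n, x⟫_ℂ • v n) := funext fun i => Subsingleton.elim _ _
    rw [this]
    exact tendsto_const_nhds
  -- N > 0
  haveI : Nonempty (Fin N) := ⟨⟨0, hN⟩⟩
  -- the orthonormal family is an orthonormal basis
  have hcard : Fintype.card (Fin N) = Module.finrank ℂ (EuclideanSpace ℂ (Fin N)) := by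
    simp [finrank_euclideanSpace]
  have hspan : ⊤ ≤ Submodule.span ℂ (Set.range v) :=
    (hortho.linearIndependent.span_eq_top_of_card_eq_finrank hcard).ge
  let b : OrthonormalBasis (Fin N) ℂ (EuclideanSpace ℂ (Fin N)) :=
    OrthonormalBasis.mk hortho hspan
  have hb : ∀ n, b n = v n := by
    intro n
    rw [show (b n = v n) from congrFun (OrthonormalBasis.coe_mk hortho hspan) n]
  have hrep : ∀ z : EuclideanSpace ℂ (Fin N), ∑ n, ⟪v n, z⟫_ℂ • v n = z := by
    intro z
    have := b.sum_repr' z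
    simpa [hb] using this
  set A := Matrix.toEuclideanCLM (𝕜 := ℂ) (M.map Complex.ofReal) with hAdef
  have hoite := orthonormal_iff_ite.mp hortho
  -- action of A on coordinates
  have hinnerA : ∀ n (z : EuclideanSpace ℂ (Fin N)),
      ⟪v n, A z⟫_ℂ = (μ n : ℂ) * ⟪v n, z⟫_ℂ := by
    intro n z
    conv_lhs => rw [← hrep z]
    rw [map_sum, inner_sum]
    simp only [map_smul, heig, inner_smul_right, hoite]
    rw [Finset.sum_eq_single n]
    · simp [mul_comm]
    · intro m _ hm
      simp [Ne.symm hm]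
    · simp
  -- coordinate recursion
  have hcrec : ∀ n t, ⟪v n, y (t + 1)⟫_ℂ =
      (θ t + ψ t * (μ n : ℂ)) * ⟪v n, y t⟫_ℂ + φ t * ⟪v n, x⟫_ℂ := by
    intro n t
    rw [hy t, inner_add_right, inner_add_right, inner_smul_right, inner_smul_right,
      inner_smul_right, hinnerA]
    ring
  -- coordinate convergence
  have hcoord : ∀ n, Tendsto (fun i => ⟪v n, y (i * K)⟫_ℂ) atTop (nhds
      (((∑ τ ∈ Finset.range K,
            (∏ σ ∈ Finset.Ico (K - τ) K, (θ σ + ψ σ * (μ n : ℂ))) * φ (K - τ - 1)) /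
          (1 - ∏ τ ∈ Finset.range K, (θ τ + ψ τ * (μ n : ℂ)))) * ⟪v n, x⟫_ℂ)) := by
    intro n
    set a : ℕ → ℂ := fun t => θ t + ψ t * (μ n : ℂ) with hadef
    set w : ℂ := ⟪v n, x⟫_ℂ with hwdef
    set d : ℕ → ℂ := fun t => φ t * w with hddef
    set P : ℂ := ∏ τ ∈ Finset.range K, a τ with hPdef
    set Q : ℂ := ∑ j ∈ Finset.range K, (∏ σ ∈ Finset.Ico (j + 1) K, a σ) * d j with hQdef
    have ha : ∀ t, a (t + K) = a t := by
      intro t; simp only [hadef]; rw [hθ, hψ]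
    have hd : ∀ t, d (t + K) = d t := by
      intro t; simp only [hddef]; rw [hφ]
    have hashift : ∀ i j, a (i * K + j) = a j := by
      intro i j; rw [Nat.add_comm]; exact arma_periodic_shift a ha i j
    have hdshift : ∀ i j, d (i * K + j) = d j := by
      intro i j; rw [Nat.add_comm]; exact arma_periodic_shift d hd i j
    have hstep : ∀ i, ⟪v n, y ((i + 1) * K)⟫_ℂ = P * ⟪v n, y (i * K)⟫_ℂ + Q := by
      intro i
      have := arma_affine_unroll a d (fun t => ⟪v n, y t⟫_ℂ) (hcrec n) (i * K) K
      rw [Nat.succ_mul]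
      rw [this, hPdef, hQdef]
      congr 1
      · congr 1
        exact Finset.prod_congr rfl fun j _ => hashift i j
      · refine Finset.sum_congr rfl fun j _ => ?_
        rw [hdshift i j]
        congr 1
        exact Finset.prod_congr rfl fun σ _ => hashift i σ
    have hform : ∀ i, ⟪v n, y (i * K)⟫_ℂ =
        P ^ i * ⟪v n, y (0 * K)⟫_ℂ + (∑ j ∈ Finset.range i, P ^ j) * Q :=
      arma_geom P Q (fun i => ⟪v n, y (i * K)⟫_ℂ) hstep
    have hPnorm : ‖P‖ < 1 := hstab n
    have h1 : Tendsto (fun i => P ^ i * ⟪v n, y (0 * K)⟫_ℂ) atTop (nhds 0) := by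
      simpa using (tendsto_pow_atTop_nhds_zero_of_norm_lt_one hPnorm).mul_const ⟪v n, y (0 * K)⟫_ℂ
    have h2 : Tendsto (fun i => (∑ j ∈ Finset.range i, P ^ j) * Q) atTop
        (nhds ((1 - P)⁻¹ * Q)) :=
      ((hasSum_geometric_of_norm_lt_one hPnorm).tendsto_sum_nat).mul_const Q
    have h3 : Tendsto (fun i => ⟪v n, y (i * K)⟫_ℂ) atTop (nhds (0 + (1 - P)⁻¹ * Q)) := by
      have := h1.add h2
      simpa only [← hform] using this
    have heq : 0 + (1 - P)⁻¹ * Q =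
        ((∑ τ ∈ Finset.range K,
            (∏ σ ∈ Finset.Ico (K - τ) K, (θ σ + ψ σ * (μ n : ℂ))) * φ (K - τ - 1)) /
          (1 - ∏ τ ∈ Finset.range K, (θ τ + ψ τ * (μ n : ℂ)))) * ⟪v n, x⟫_ℂ := by
      rw [zero_add, hQdef, hddef, hPdef, hadef]
      simp only []
      rw [arma_reflect_sum K (fun t => θ t + ψ t * (μ n : ℂ)) φ]
      rw [div_eq_mul_inv]
      rw [show (∑ j ∈ Finset.range K,
          (∏ σ ∈ Finset.Ico (j + 1) K, (θ σ + ψ σ * (μ n : ℂ))) * (φ j * w))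
        = (∑ j ∈ Finset.range K,
          (∏ σ ∈ Finset.Ico (j + 1) K, (θ σ + ψ σ * (μ n : ℂ))) * φ j) * w by
        rw [Finset.sum_mul]; exact Finset.sum_congr rfl fun j _ => by ring]
      ring
    rw [← heq]
    exact h3
  -- assemble
  have hrw : (fun i => y (i * K)) = fun i => ∑ n, ⟪v n, y (i * K)⟫_ℂ • v n :=
    funext fun i => (hrep _).symm
  rw [hrw]
  refine tendsto_finset_sum _ fun n _ => ?_
  rw [smul_smul]
  exact (hcoord n).smul_const (v n)
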